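/- Let T > 0 and let ρ : ℝ^d × [0,T] → (0,∞) be a C¹ function such that for every t ∈ [0,T] the function ρ(·,t) is a probability density on ℝ^d and ρ(·,t) log ρ(·,t) is Lebesgue integrable. Let v : ℝ^d × [0,T] → ℝ^d be a C¹ vector field such that there is a compact set K ⊆ ℝ^d with v(x,t) = 0 for all x ∉ K and all t ∈ [0,T]. Assume the continuity equation ∂_t ρ(x,t) + div_x(ρ(x,t) v(x,t)) = 0 holds pointwise on ℝ^d × [0,T], and that there exists a Lebesgue-integrable function g on ℝ^d with |∂_t ρ(x,t)| · (1 + |log ρ(x,t)|) ≤ g(x) for all (x,t). Then H(ρ(·,T)) − H(ρ(·,0)) = ∫₀ᵀ ∫_{ℝ^d} ∇_x ρ(x,t) · v(x,t) dx dt. Equivalently, setting u(x,t) = ∇_x ρ(x,t) / (2 ρ(x,t)), one has ∫₀ᵀ ∫_{ℝ^d} |u + v|²(x,t) ρ(x,t) dx dt = ∫₀ᵀ ∫_{ℝ^d} (|u|² + |v|²)(x,t) ρ(x,t) dx dt + H(ρ(·,T)) − H(ρ(·,0)). -/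

import Mathlib

open MeasureTheory
open scoped ENNReal

section Aux

/-- Per-time-slice integration by parts: if `r = -div(f w)` pointwise, `f > 0` is `C¹`,
`w` is `C¹` vanishing outside a compact set, then `∫ r (log f + 1) = ∫ ∇f · w`. -/
lemma entropy_ibp_slice {d : ℕ} {K : Set (Fin d → ℝ)} (hK : IsCompact K)
    (f : (Fin d → ℝ) → ℝ) (w : (Fin d → ℝ) → (Fin d → ℝ)) (r : (Fin d → ℝ) → ℝ)
    (hf : ContDiff ℝ 1 f) (hw : ContDiff ℝ 1 w) (hfpos : ∀ x, 0 < f x)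
    (hwz : ∀ x ∉ K, w x = 0)
    (hr : ∀ x, r x + ∑ i, fderiv ℝ (fun y => f y * w y i) x (Pi.single i 1) = 0) :
    ∫ x, r x * (Real.log (f x) + 1) = ∫ x, ∑ i, fderiv ℝ f x (Pi.single i 1) * w x i := by
  classical
  set L : (Fin d → ℝ) → ℝ := fun y => Real.log (f y) + 1 with hLdef
  have hfne : ∀ x, f x ≠ 0 := fun x => (hfpos x).ne'
  have hLC : ContDiff ℝ 1 L := (hf.log hfne).add contDiff_const
  have hLcont : Continuous L := hLC.continuous
  have hwi : ∀ i, ContDiff ℝ 1 (fun y => w y i) := fun i => (contDiff_pi.mp hw i)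
  have hP : ∀ i, ContDiff ℝ 1 (fun y => f y * w y i) := fun i => hf.mul (hwi i)
  -- fderiv of L
  have hLder : ∀ x, HasFDerivAt L ((f x)⁻¹ • fderiv ℝ f x) x := by
    intro x
    have h1 : HasFDerivAt (fun y => Real.log (f y)) ((f x)⁻¹ • fderiv ℝ f x) x :=
      (Real.hasDerivAt_log (hfne x)).comp_hasFDerivAt x (hf.differentiable one_ne_zero x).hasFDerivAt
    simpa [L] using h1.add_const 1
  have hLfderiv : ∀ x, fderiv ℝ L x = (f x)⁻¹ • fderiv ℝ f x := fun x => (hLder x).fderiv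
  -- vanishing of P off K
  have hPz : ∀ i, ∀ x ∉ K, (fun y => f y * w y i) x = 0 := by
    intro i x hx; simp [hwz x hx]
  have hPderz : ∀ i, ∀ x ∉ K, fderiv ℝ (fun y => f y * w y i) x = 0 := by
    intro i x hx
    have hopen : IsOpen Kᶜ := hK.isClosed.isOpen_compl
    have hev : (fun y => f y * w y i) =ᶠ[nhds x] (fun _ => (0:ℝ)) := by
      filter_upwards [hopen.mem_nhds hx] with y hy
      simp [hwz y hy]
    rw [hev.fderiv_eq]; exact fderiv_const_apply 0
  -- integrability helper
  have key_int : ∀ (φ : (Fin d → ℝ) → ℝ), Continuous φ → (∀ x ∉ K, φ x = 0) → Integrable φ :=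
    fun φ hc h0 => hc.integrable_of_hasCompactSupport (HasCompactSupport.intro hK h0)
  have hcf : Continuous fun x => fderiv ℝ f x := hf.continuous_fderiv one_ne_zero
  have hcP : ∀ i, Continuous fun x => fderiv ℝ (fun y => f y * w y i) x :=
    fun i => (hP i).continuous_fderiv one_ne_zero
  have hcL : Continuous fun x => fderiv ℝ L x := hLC.continuous_fderiv one_ne_zero
  -- for each i, integration by parts
  have main : ∀ i : Fin d,
      ∫ x, fderiv ℝ f x (Pi.single i 1) * w x i
        = - ∫ x, fderiv ℝ (fun y => f y * w y i) x (Pi.single i 1) * L x := by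
    intro i
    have int1 : Integrable fun x => fderiv ℝ (fun y => f y * w y i) x (Pi.single i 1) * L x := by
      apply key_int _ (((hcP i).clm_apply continuous_const).mul hLcont)
      intro x hx; simp [hPderz i x hx]
    have int2 : Integrable fun x => (f x * w x i) * fderiv ℝ L x (Pi.single i 1) := by
      apply key_int _ (((hf.continuous).mul ((hwi i).continuous)).mul
        (hcL.clm_apply continuous_const))
      intro x hx; simp [hwz x hx]
    have int3 : Integrable fun x => (f x * w x i) * L x := by
      apply key_int _ (((hf.continuous).mul ((hwi i).continuous)).mul hLcont)
      intro x hx; simp [hwz x hx]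
    have ibp := integral_mul_fderiv_eq_neg_fderiv_mul_of_integrable int1 int2 int3
      (fun x _ => (hP i).differentiable one_ne_zero x) (fun x _ => hLC.differentiable one_ne_zero x)
    -- ibp : ∫ (f x * w x i) * fderiv L x e = - ∫ fderiv P x e * L x
    rw [← ibp]
    apply integral_congr_ae; filter_upwards with x
    rw [hLfderiv x]
    simp only [ContinuousLinearMap.smul_apply, smul_eq_mul]
    field_simp
    rw [eq_div_iff (hfne x)]
  -- sum over i
  have intsum1 : ∀ i : Fin d, Integrable fun x => fderiv ℝ f x (Pi.single i 1) * w x i := by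
    intro i
    apply key_int _ ((hcf.clm_apply continuous_const).mul ((hwi i).continuous))
    intro x hx; simp [hwz x hx]
  have intsum2 : ∀ i : Fin d, Integrable fun x =>
      fderiv ℝ (fun y => f y * w y i) x (Pi.single i 1) * L x := by
    intro i
    apply key_int _ (((hcP i).clm_apply continuous_const).mul hLcont)
    intro x hx; simp [hPderz i x hx]
  calc ∫ x, r x * L x
      = ∫ x, ∑ i, -(fderiv ℝ (fun y => f y * w y i) x (Pi.single i 1) * L x) := by
        apply integral_congr_ae; filter_upwards with x
        have := hr x
        have hrx : r x = -∑ i, fderiv ℝ (fun y => f y * w y i) x (Pi.single i 1) := by linarith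
        rw [hrx, ← Finset.sum_neg_distrib, Finset.sum_mul]
        congr 1; ext i; ring
    _ = ∑ i, ∫ x, -(fderiv ℝ (fun y => f y * w y i) x (Pi.single i 1) * L x) :=
        integral_finset_sum (μ := volume)
          (f := fun i (x : Fin d → ℝ) => -(fderiv ℝ (fun y => f y * w y i) x (Pi.single i 1) * L x))
          Finset.univ (fun i _ => by exact (intsum2 i).neg)
    _ = ∑ i, ∫ x, fderiv ℝ f x (Pi.single i 1) * w x i := by
        refine Finset.sum_congr rfl fun i _ => ?_
        rw [integral_neg, ← main i]
    _ = ∫ x, ∑ i, fderiv ℝ f x (Pi.single i 1) * w x i :=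
        (integral_finset_sum _ (fun i _ => intsum1 i)).symm

end Aux

/-- Integration-by-parts identity for the Boltzmann entropy along a solution of the
continuity equation: if `ρ : ℝ^d × [0,T] → (0,∞)` is a `C¹` probability density with
integrable `ρ log ρ`, `v` is a `C¹` vector field vanishing in space outside a compact set,
the continuity equation `∂ₜρ + div(ρ v) = 0` holds pointwise and a domination condition
holds, then `H(ρ(·,T)) - H(ρ(·,0)) = ∫₀ᵀ ∫ ∇ₓρ · v dx dt`; equivalently, with
`u = ∇ρ/(2ρ)`, one has
`∫₀ᵀ ∫ |u+v|² ρ = ∫₀ᵀ ∫ (|u|² + |v|²) ρ + H(ρ(·,T)) - H(ρ(·,0))`. -/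
theorem entropy_integration_by_parts
    (d : ℕ) (T : ℝ) (hT : 0 < T)
    (ρ : (Fin d → ℝ) × ℝ → ℝ) (v : (Fin d → ℝ) × ℝ → (Fin d → ℝ))
    (hρC1 : ContDiffOn ℝ 1 ρ (Set.univ ×ˢ Set.Icc 0 T))
    (hρpos : ∀ (x : Fin d → ℝ), ∀ t ∈ Set.Icc (0:ℝ) T, 0 < ρ (x, t))
    (hρint : ∀ t ∈ Set.Icc (0:ℝ) T, Integrable (fun x => ρ (x, t)))
    (hρprob : ∀ t ∈ Set.Icc (0:ℝ) T, ∫ x, ρ (x, t) = 1)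
    (hent : ∀ t ∈ Set.Icc (0:ℝ) T, Integrable (fun x => ρ (x, t) * Real.log (ρ (x, t))))
    (hvC1 : ContDiffOn ℝ 1 v (Set.univ ×ˢ Set.Icc 0 T))
    (hvK : ∃ K : Set (Fin d → ℝ), IsCompact K ∧
      ∀ x ∉ K, ∀ t ∈ Set.Icc (0:ℝ) T, v (x, t) = 0)
    (hcont : ∀ (x : Fin d → ℝ), ∀ t ∈ Set.Icc (0:ℝ) T,
      derivWithin (fun s => ρ (x, s)) (Set.Icc 0 T) t
        + ∑ i, fderiv ℝ (fun y => ρ (y, t) * v (y, t) i) x (Pi.single i 1) = 0)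
    (hdom : ∃ g : (Fin d → ℝ) → ℝ, Integrable g ∧
      ∀ (x : Fin d → ℝ), ∀ t ∈ Set.Icc (0:ℝ) T,
        |derivWithin (fun s => ρ (x, s)) (Set.Icc 0 T) t| * (1 + |Real.log (ρ (x, t))|)
          ≤ g x) :
    ((∫ x, ρ (x, T) * Real.log (ρ (x, T))) - ∫ x, ρ (x, 0) * Real.log (ρ (x, 0))
        = ∫ t in Set.Icc (0:ℝ) T,
            ∫ x, ∑ i, fderiv ℝ (fun y => ρ (y, t)) x (Pi.single i 1) * v (x, t) i)
    ∧ (((∫⁻ t in Set.Icc (0:ℝ) T, ∫⁻ x, ENNReal.ofReal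
            ((∑ i, (fderiv ℝ (fun y => ρ (y, t)) x (Pi.single i 1) / (2 * ρ (x, t))
                + v (x, t) i) ^ 2) * ρ (x, t)) : ℝ≥0∞) : EReal)
        = ((∫⁻ t in Set.Icc (0:ℝ) T, ∫⁻ x, ENNReal.ofReal
            ((∑ i, ((fderiv ℝ (fun y => ρ (y, t)) x (Pi.single i 1) / (2 * ρ (x, t))) ^ 2
                + v (x, t) i ^ 2)) * ρ (x, t)) : ℝ≥0∞) : EReal)
          + ((∫ x, ρ (x, T) * Real.log (ρ (x, T)) : ℝ) : EReal)
          - ((∫ x, ρ (x, 0) * Real.log (ρ (x, 0)) : ℝ) : EReal)) := by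
  classical
  obtain ⟨K, hK, hvz⟩ := hvK
  obtain ⟨g, hgint, hgbound⟩ := hdom
  have hIcc : UniqueDiffOn ℝ (Set.Icc (0:ℝ) T) := uniqueDiffOn_Icc hT
  have hTmem : (T:ℝ) ∈ Set.Icc (0:ℝ) T := ⟨hT.le, le_rfl⟩
  have h0mem : (0:ℝ) ∈ Set.Icc (0:ℝ) T := ⟨le_rfl, hT.le⟩
  set S : Set ((Fin d → ℝ) × ℝ) := Set.univ ×ˢ Set.Icc (0:ℝ) T with hSdef
  have hSu : UniqueDiffOn ℝ S := uniqueDiffOn_univ.prod hIcc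
  set D : (Fin d → ℝ) × ℝ → ((Fin d → ℝ) × ℝ) →L[ℝ] ℝ := fderivWithin ℝ ρ S with hDdef
  have hDcont : ContinuousOn D S := hρC1.continuousOn_fderivWithin hSu le_rfl
  have hcontOnρ : ContinuousOn ρ S := hρC1.continuousOn
  have hcontOnv : ContinuousOn v S := hvC1.continuousOn
  -- C¹ slices in space
  have hslice : ∀ t ∈ Set.Icc (0:ℝ) T, ContDiff ℝ 1 (fun y => ρ (y, t)) := by
    intro t ht
    rw [← contDiffOn_univ]
    exact hρC1.comp ((contDiff_id.prodMk contDiff_const).contDiffOn)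
      (fun y _ => ⟨Set.mem_univ _, ht⟩)
  have hvslice : ∀ t ∈ Set.Icc (0:ℝ) T, ContDiff ℝ 1 (fun y => v (y, t)) := by
    intro t ht
    rw [← contDiffOn_univ]
    exact hvC1.comp ((contDiff_id.prodMk contDiff_const).contDiffOn)
      (fun y _ => ⟨Set.mem_univ _, ht⟩)
  -- space derivative identification
  have hspace : ∀ t ∈ Set.Icc (0:ℝ) T, ∀ x : Fin d → ℝ,
      HasFDerivAt (fun y => ρ (y, t))
        ((D (x, t)).comp (ContinuousLinearMap.inl ℝ (Fin d → ℝ) ℝ)) x := by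
    intro t ht x
    have hρd : HasFDerivWithinAt ρ (D (x, t)) S (x, t) :=
      ((hρC1.differentiableOn one_ne_zero) (x, t) ⟨Set.mem_univ _, ht⟩).hasFDerivWithinAt
    have hj : HasFDerivAt (fun y : Fin d → ℝ => ((y, t) : (Fin d → ℝ) × ℝ))
        (ContinuousLinearMap.inl ℝ (Fin d → ℝ) ℝ) x := hasFDerivAt_prodMk_left x t
    have hcomp := hρd.comp x (hj.hasFDerivWithinAt (s := Set.univ))
      (fun y _ => (⟨Set.mem_univ _, ht⟩ : (y, t) ∈ S))
    exact hcomp.hasFDerivAt (Filter.univ_mem)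
  have hspace_fd : ∀ t ∈ Set.Icc (0:ℝ) T, ∀ x : Fin d → ℝ, ∀ i : Fin d,
      fderiv ℝ (fun y => ρ (y, t)) x (Pi.single i 1) = D (x, t) (Pi.single i 1, 0) := by
    intro t ht x i
    rw [(hspace t ht x).fderiv]
    simp
  -- time derivative identification
  have htime : ∀ x : Fin d → ℝ, ∀ t ∈ Set.Icc (0:ℝ) T,
      HasDerivWithinAt (fun s => ρ (x, s)) (D (x, t) (0, 1)) (Set.Icc 0 T) t := by
    intro x t ht
    have hρd : HasFDerivWithinAt ρ (D (x, t)) S (x, t) :=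
      ((hρC1.differentiableOn one_ne_zero) (x, t) ⟨Set.mem_univ _, ht⟩).hasFDerivWithinAt
    have hι : HasDerivWithinAt (fun s : ℝ => ((x, s) : (Fin d → ℝ) × ℝ))
        (((0 : Fin d → ℝ), (1:ℝ))) (Set.Icc 0 T) t :=
      ((HasDerivAt.prodMk (hasDerivAt_const t x) (hasDerivAt_id t))).hasDerivWithinAt
    exact hρd.comp_hasDerivWithinAt t hι (fun s hs => ⟨Set.mem_univ _, hs⟩)
  have htimed : ∀ x : Fin d → ℝ, ∀ t ∈ Set.Icc (0:ℝ) T,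
      derivWithin (fun s => ρ (x, s)) (Set.Icc 0 T) t = D (x, t) (0, 1) :=
    fun x t ht => (htime x t ht).derivWithin (hIcc t ht)
  -- the time-derivative-of-entropy integrand
  set h : (Fin d → ℝ) → ℝ → ℝ := fun x t =>
    derivWithin (fun s => ρ (x, s)) (Set.Icc 0 T) t * (Real.log (ρ (x, t)) + 1) with hhdef
  have hSmeas : MeasurableSet S := MeasurableSet.univ.prod measurableSet_Icc
  have hprodmeas : (volume : Measure (Fin d → ℝ)).prod (volume.restrict (Set.Icc (0:ℝ) T))
      = ((volume : Measure (Fin d → ℝ)).prod volume).restrict S := by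
    rw [hSdef, ← Measure.prod_restrict, Measure.restrict_univ]
  ------------------------------------------------------------------
  -- PART 1
  ------------------------------------------------------------------
  have part1 : (∫ x, ρ (x, T) * Real.log (ρ (x, T))) - ∫ x, ρ (x, 0) * Real.log (ρ (x, 0))
      = ∫ t in Set.Icc (0:ℝ) T,
          ∫ x, ∑ i, fderiv ℝ (fun y => ρ (y, t)) x (Pi.single i 1) * v (x, t) i := by
    have step2 : ∀ x : Fin d → ℝ, ρ (x, T) * Real.log (ρ (x, T))
        - ρ (x, 0) * Real.log (ρ (x, 0)) = ∫ t in Set.Icc (0:ℝ) T, h x t := by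
      intro x
      have hcρx : ContinuousOn (fun s => ρ (x, s)) (Set.Icc 0 T) :=
        hcontOnρ.comp ((continuous_const.prodMk continuous_id).continuousOn)
          (fun s hs => ⟨Set.mem_univ _, hs⟩)
      have hpos : ∀ s ∈ Set.Icc (0:ℝ) T, ρ (x, s) ≠ 0 := fun s hs => (hρpos x s hs).ne'
      have hcont1 : ContinuousOn (fun s => ρ (x, s) * Real.log (ρ (x, s))) (Set.Icc 0 T) :=
        hcρx.mul (hcρx.log hpos)
      have hmid : ∀ s ∈ Set.Ioo (0:ℝ) T,
          HasDerivWithinAt (fun s => ρ (x, s) * Real.log (ρ (x, s))) (h x s) (Set.Ioi s) s := by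
        intro s hs
        have hsI : s ∈ Set.Icc (0:ℝ) T := Set.mem_Icc_of_Ioo hs
        have h1 : HasDerivAt (fun s => ρ (x, s)) (D (x, s) (0, 1)) s :=
          (htime x s hsI).hasDerivAt (Icc_mem_nhds hs.1 hs.2)
        have h2 := (Real.hasDerivAt_mul_log (hpos s hsI)).comp s h1
        have heq : h x s = (Real.log (ρ (x, s)) + 1) * D (x, s) (0, 1) := by
          rw [hhdef]; simp only; rw [htimed x s hsI]; ring
        rw [heq]
        exact h2.hasDerivWithinAt
      have hDx : ContinuousOn (fun s => D (x, s) (0, 1)) (Set.Icc 0 T) := by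
        have hmap : Set.MapsTo (fun s : ℝ => ((x, s) : (Fin d → ℝ) × ℝ)) (Set.Icc 0 T) S :=
          fun s hs => ⟨Set.mem_univ _, hs⟩
        exact (hDcont.comp ((continuous_const.prodMk continuous_id).continuousOn) hmap).clm_apply
          continuousOn_const
      have hhc : ContinuousOn (fun s => h x s) (Set.Icc 0 T) := by
        apply ContinuousOn.congr (hDx.mul ((hcρx.log hpos).add (continuousOn_const (c := (1:ℝ)))))
        intro s hs
        rw [hhdef]; simp only; rw [htimed x s hs]; rfl
      have hint : IntervalIntegrable (fun s => h x s) volume 0 T := by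
        apply ContinuousOn.intervalIntegrable
        rwa [Set.uIcc_of_le hT.le]
      have hftc := intervalIntegral.integral_eq_sub_of_hasDeriv_right_of_le hT.le
        hcont1 hmid hint
      rw [MeasureTheory.integral_Icc_eq_integral_Ioc, ← intervalIntegral.integral_of_le hT.le,
        hftc]
    have hmeasH : AEStronglyMeasurable (Function.uncurry h)
        ((volume : Measure (Fin d → ℝ)).prod (volume.restrict (Set.Icc (0:ℝ) T))) := by
      rw [hprodmeas]
      have hHcont : ContinuousOn
          (fun p : (Fin d → ℝ) × ℝ => (D p (0, 1)) * (Real.log (ρ p) + 1)) S :=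
        (hDcont.clm_apply continuousOn_const).mul
          ((hcontOnρ.log (fun p hp => by
            have := hρpos p.1 p.2 hp.2; rw [Prod.mk.eta] at this; exact this.ne')).add
            continuousOn_const)
      apply (hHcont.aestronglyMeasurable hSmeas).congr
      refine (MeasureTheory.ae_restrict_iff' hSmeas).mpr (Filter.Eventually.of_forall ?_)
      rintro ⟨x, t⟩ hp
      rw [Function.uncurry]
      simp only
      rw [hhdef]; simp only; rw [htimed x t hp.2]
    have hbound : ∀ᵐ p ∂((volume : Measure (Fin d → ℝ)).prod
        (volume.restrict (Set.Icc (0:ℝ) T))), ‖Function.uncurry h p‖ ≤ g p.1 := by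
      rw [hprodmeas]
      refine (MeasureTheory.ae_restrict_iff' hSmeas).mpr (Filter.Eventually.of_forall ?_)
      rintro ⟨x, t⟩ hp
      have h1 := hgbound x t hp.2
      have h2 : |h x t| ≤ |derivWithin (fun s => ρ (x, s)) (Set.Icc 0 T) t|
          * (1 + |Real.log (ρ (x, t))|) := by
        rw [hhdef]; simp only [abs_mul]
        gcongr
        calc |Real.log (ρ (x, t)) + 1| ≤ |Real.log (ρ (x, t))| + |(1:ℝ)| := abs_add_le _ _
          _ = 1 + |Real.log (ρ (x, t))| := by rw [abs_one]; ring
      calc ‖Function.uncurry h (x, t)‖ = |h x t| := rfl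
        _ ≤ _ := h2
        _ ≤ g x := h1
    have hgprod : Integrable (fun p : (Fin d → ℝ) × ℝ => g p.1)
        ((volume : Measure (Fin d → ℝ)).prod (volume.restrict (Set.Icc (0:ℝ) T))) := by
      haveI : IsFiniteMeasure ((volume : Measure ℝ).restrict (Set.Icc (0:ℝ) T)) :=
        ⟨by rw [Measure.restrict_apply_univ]; exact measure_Icc_lt_top⟩
      have hone : Integrable (fun _ : ℝ => (1:ℝ))
          ((volume : Measure ℝ).restrict (Set.Icc (0:ℝ) T)) := integrable_const 1
      have := hgint.mul_prod hone
      simpa using this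
    have step3 : Integrable (Function.uncurry h)
        ((volume : Measure (Fin d → ℝ)).prod (volume.restrict (Set.Icc (0:ℝ) T))) :=
      hgprod.mono' hmeasH hbound
    have step5 : ∀ t ∈ Set.Icc (0:ℝ) T, (∫ x, h x t)
        = ∫ x, ∑ i, fderiv ℝ (fun y => ρ (y, t)) x (Pi.single i 1) * v (x, t) i := by
      intro t ht
      exact entropy_ibp_slice hK (fun y => ρ (y, t)) (fun y => v (y, t))
        (fun x => derivWithin (fun s => ρ (x, s)) (Set.Icc 0 T) t)
        (hslice t ht) (hvslice t ht) (fun x => hρpos x t ht)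
        (fun x hx => hvz x hx t ht) (fun x => hcont x t ht)
    calc (∫ x, ρ (x, T) * Real.log (ρ (x, T))) - ∫ x, ρ (x, 0) * Real.log (ρ (x, 0))
        = ∫ x, (ρ (x, T) * Real.log (ρ (x, T)) - ρ (x, 0) * Real.log (ρ (x, 0))) :=
          (integral_sub (hent T hTmem) (hent 0 h0mem)).symm
      _ = ∫ x, ∫ t in Set.Icc (0:ℝ) T, h x t := by
          exact integral_congr_ae (Filter.Eventually.of_forall step2)
      _ = ∫ t in Set.Icc (0:ℝ) T, ∫ x, h x t := integral_integral_swap step3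
      _ = ∫ t in Set.Icc (0:ℝ) T,
            ∫ x, ∑ i, fderiv ℝ (fun y => ρ (y, t)) x (Pi.single i 1) * v (x, t) i :=
          setIntegral_congr_fun measurableSet_Icc (fun t ht => step5 t ht)

  refine ⟨part1, ?_⟩
  ------------------------------------------------------------------
  -- PART 2
  ------------------------------------------------------------------
  set HT : ℝ := ∫ x, ρ (x, T) * Real.log (ρ (x, T)) with hHTdef
  set H0 : ℝ := ∫ x, ρ (x, 0) * Real.log (ρ (x, 0)) with hH0def
  set a : ℝ × (Fin d → ℝ) → ℝ := fun p =>
    (∑ i, (fderiv ℝ (fun y => ρ (y, p.1)) p.2 (Pi.single i 1) / (2 * ρ (p.2, p.1))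
      + v (p.2, p.1) i) ^ 2) * ρ (p.2, p.1) with hadef
  set b : ℝ × (Fin d → ℝ) → ℝ := fun p =>
    (∑ i, ((fderiv ℝ (fun y => ρ (y, p.1)) p.2 (Pi.single i 1) / (2 * ρ (p.2, p.1))) ^ 2
      + v (p.2, p.1) i ^ 2)) * ρ (p.2, p.1) with hbdef
  set c : ℝ × (Fin d → ℝ) → ℝ := fun p =>
    ∑ i, fderiv ℝ (fun y => ρ (y, p.1)) p.2 (Pi.single i 1) * v (p.2, p.1) i with hcdef
  set π : Measure (ℝ × (Fin d → ℝ)) :=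
    ((volume : Measure ℝ).restrict (Set.Icc (0:ℝ) T)).prod volume with hπdef
  set S' : Set (ℝ × (Fin d → ℝ)) := (Set.Icc (0:ℝ) T) ×ˢ (Set.univ : Set (Fin d → ℝ))
    with hS'def
  have hS'meas : MeasurableSet S' := measurableSet_Icc.prod MeasurableSet.univ
  have hπ : π = ((volume : Measure ℝ).prod volume).restrict S' := by
    rw [hπdef, hS'def, ← Measure.prod_restrict, Measure.restrict_univ]
  -- continuity infrastructure on S'
  have hmapsS : Set.MapsTo (fun p : ℝ × (Fin d → ℝ) => ((p.2, p.1) : (Fin d → ℝ) × ℝ)) S' S :=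
    fun p hp => ⟨Set.mem_univ _, hp.1⟩
  have hswapc : Continuous (fun p : ℝ × (Fin d → ℝ) => ((p.2, p.1) : (Fin d → ℝ) × ℝ)) :=
    continuous_snd.prodMk continuous_fst
  have hρS' : ContinuousOn (fun p : ℝ × (Fin d → ℝ) => ρ (p.2, p.1)) S' :=
    hcontOnρ.comp hswapc.continuousOn hmapsS
  have hρS'pos : ∀ p ∈ S', 0 < ρ (p.2, p.1) := fun p hp => hρpos p.2 p.1 hp.1
  have hρS'ne : ∀ p ∈ S', ρ (p.2, p.1) ≠ 0 := fun p hp => (hρS'pos p hp).ne'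
  have hvS' : ∀ i : Fin d, ContinuousOn (fun p : ℝ × (Fin d → ℝ) => v (p.2, p.1) i) S' :=
    fun i => (continuous_apply i).comp_continuousOn (hcontOnv.comp hswapc.continuousOn hmapsS)
  have hDS' : ∀ i : Fin d, ContinuousOn
      (fun p : ℝ × (Fin d → ℝ) => D (p.2, p.1) (Pi.single i 1, 0)) S' :=
    fun i => (hDcont.comp hswapc.continuousOn hmapsS).clm_apply continuousOn_const
  have huS' : ∀ i : Fin d, ContinuousOn
      (fun p : ℝ × (Fin d → ℝ) => D (p.2, p.1) (Pi.single i 1, 0) / (2 * ρ (p.2, p.1))) S' :=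
    fun i => (hDS' i).div (continuousOn_const.mul hρS')
      (fun p hp => mul_ne_zero two_ne_zero (hρS'ne p hp))
  have haScont : ContinuousOn (fun p : ℝ × (Fin d → ℝ) =>
      (∑ i, (D (p.2, p.1) (Pi.single i 1, 0) / (2 * ρ (p.2, p.1)) + v (p.2, p.1) i) ^ 2)
        * ρ (p.2, p.1)) S' := by
    refine ContinuousOn.mul ?_ hρS'
    refine continuousOn_finset_sum _ (fun i _ => ?_)
    exact ((huS' i).add (hvS' i)).pow 2
  have hbScont : ContinuousOn (fun p : ℝ × (Fin d → ℝ) =>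
      (∑ i, ((D (p.2, p.1) (Pi.single i 1, 0) / (2 * ρ (p.2, p.1))) ^ 2 + v (p.2, p.1) i ^ 2))
        * ρ (p.2, p.1)) S' := by
    refine ContinuousOn.mul ?_ hρS'
    refine continuousOn_finset_sum _ (fun i _ => ?_)
    exact ((huS' i).pow 2).add ((hvS' i).pow 2)
  have hcScont : ContinuousOn (fun p : ℝ × (Fin d → ℝ) =>
      ∑ i, D (p.2, p.1) (Pi.single i 1, 0) * v (p.2, p.1) i) S' := by
    refine continuousOn_finset_sum _ (fun i _ => ?_)
    exact (hDS' i).mul (hvS' i)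
  -- equalities on S' between the fderiv forms and the D forms
  have haeq : ∀ p ∈ S', a p =
      (∑ i, (D (p.2, p.1) (Pi.single i 1, 0) / (2 * ρ (p.2, p.1)) + v (p.2, p.1) i) ^ 2)
        * ρ (p.2, p.1) := by
    intro p hp
    simp only [hadef]
    congr 1
    exact Finset.sum_congr rfl fun i _ => by rw [hspace_fd p.1 hp.1 p.2 i]
  have hbeq : ∀ p ∈ S', b p =
      (∑ i, ((D (p.2, p.1) (Pi.single i 1, 0) / (2 * ρ (p.2, p.1))) ^ 2 + v (p.2, p.1) i ^ 2))
        * ρ (p.2, p.1) := by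
    intro p hp
    simp only [hbdef]
    congr 1
    exact Finset.sum_congr rfl fun i _ => by rw [hspace_fd p.1 hp.1 p.2 i]
  have hceq : ∀ p ∈ S', c p =
      ∑ i, D (p.2, p.1) (Pi.single i 1, 0) * v (p.2, p.1) i := by
    intro p hp
    simp only [hcdef]
    exact Finset.sum_congr rfl fun i _ => by rw [hspace_fd p.1 hp.1 p.2 i]
  -- a.e. transfer
  have haeS' : ∀ (P : ℝ × (Fin d → ℝ) → Prop), (∀ p ∈ S', P p) → (∀ᵐ p ∂π, P p) := by
    intro P hP
    rw [hπ]
    exact (MeasureTheory.ae_restrict_iff' hS'meas).mpr (Filter.Eventually.of_forall hP)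
  have hmeas_gen : ∀ (F G : ℝ × (Fin d → ℝ) → ℝ), ContinuousOn G S' → (∀ p ∈ S', F p = G p)
      → AEStronglyMeasurable F π := by
    intro F G hG hFG
    rw [hπ]
    apply (hG.aestronglyMeasurable hS'meas).congr
    refine (MeasureTheory.ae_restrict_iff' hS'meas).mpr (Filter.Eventually.of_forall ?_)
    intro p hp
    exact (hFG p hp).symm
  have hameas : AEStronglyMeasurable a π := hmeas_gen a _ haScont haeq
  have hbmeas : AEStronglyMeasurable b π := hmeas_gen b _ hbScont hbeq
  have hcmeas : AEStronglyMeasurable c π := hmeas_gen c _ hcScont hceq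
  have hameas' : AEMeasurable (fun z => ENNReal.ofReal (a z)) π :=
    ENNReal.measurable_ofReal.comp_aemeasurable hameas.aemeasurable
  have hbmeas' : AEMeasurable (fun z => ENNReal.ofReal (b z)) π :=
    ENNReal.measurable_ofReal.comp_aemeasurable hbmeas.aemeasurable
  have hcmeas' : AEMeasurable (fun z => ENNReal.ofReal (c z)) π :=
    ENNReal.measurable_ofReal.comp_aemeasurable hcmeas.aemeasurable
  -- pointwise algebraic identity on S'
  have habc : ∀ p ∈ S', a p = b p + c p := by
    intro p hp
    have hne : ρ (p.2, p.1) ≠ 0 := hρS'ne p hp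
    simp only [hadef, hbdef, hcdef]
    rw [Finset.sum_mul, Finset.sum_mul, ← Finset.sum_add_distrib]
    refine Finset.sum_congr rfl fun i _ => ?_
    field_simp
    ring
  have hann : ∀ p ∈ S', 0 ≤ a p := by
    intro p hp
    simp only [hadef]
    exact mul_nonneg (Finset.sum_nonneg fun i _ => sq_nonneg _) (hρS'pos p hp).le
  have hbnn : ∀ p ∈ S', 0 ≤ b p := by
    intro p hp
    simp only [hbdef]
    exact mul_nonneg
      (Finset.sum_nonneg fun i _ => add_nonneg (sq_nonneg _) (sq_nonneg _)) (hρS'pos p hp).le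
  -- integrability of c
  have hKc : IsCompact ((Set.Icc (0:ℝ) T) ×ˢ K) := isCompact_Icc.prod hK
  obtain ⟨M, hM⟩ := hKc.exists_bound_of_continuousOn
    (hcScont.mono (Set.prod_mono subset_rfl (Set.subset_univ K)))
  have hczero : ∀ p ∈ S', p.2 ∉ K → c p = 0 := by
    intro p hp hpK
    simp only [hcdef]
    refine Finset.sum_eq_zero fun i _ => ?_
    rw [hvz p.2 hpK p.1 hp.1]
    simp
  have hcbound : ∀ p ∈ S',
      ‖c p‖ ≤ Set.indicator ((Set.Icc (0:ℝ) T) ×ˢ K) (fun _ => M) p := by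
    intro p hp
    by_cases hpK : p.2 ∈ K
    · have hpm : p ∈ (Set.Icc (0:ℝ) T) ×ˢ K := ⟨hp.1, hpK⟩
      rw [Set.indicator_of_mem hpm, hceq p hp]
      exact hM p hpm
    · rw [Set.indicator_of_notMem (fun hmem => hpK hmem.2), hczero p hp hpK]
      simp
  have hindint : Integrable (Set.indicator ((Set.Icc (0:ℝ) T) ×ˢ K) (fun _ => M)) π := by
    rw [hπ, integrable_indicator_iff (measurableSet_Icc.prod hK.measurableSet)]
    refine (integrableOn_const_iff (by finiteness)).mpr (Or.inr ?_)
    calc (((volume : Measure ℝ).prod volume).restrict S') ((Set.Icc (0:ℝ) T) ×ˢ K)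
        ≤ ((volume : Measure ℝ).prod volume) ((Set.Icc (0:ℝ) T) ×ˢ K) :=
          Measure.restrict_apply_le _ _
      _ = volume (Set.Icc (0:ℝ) T) * volume K := Measure.prod_prod _ _
      _ < ⊤ := ENNReal.mul_lt_top measure_Icc_lt_top hK.measure_lt_top
  have hc_int : Integrable c π := hindint.mono' hcmeas (haeS' _ hcbound)
  have hcplus : (∫⁻ z, ENNReal.ofReal (c z) ∂π) ≠ ⊤ := by
    have hle : (∫⁻ z, ENNReal.ofReal (c z) ∂π) ≤ ∫⁻ z, (‖c z‖₊ : ℝ≥0∞) ∂π :=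
      lintegral_mono fun z => Real.ofReal_le_enorm _
    exact (hle.trans_lt hc_int.2).ne
  have hcminus : (∫⁻ z, ENNReal.ofReal (-c z) ∂π) ≠ ⊤ := by
    have hle : (∫⁻ z, ENNReal.ofReal (-c z) ∂π) ≤ ∫⁻ z, (‖c z‖₊ : ℝ≥0∞) ∂π := by
      refine lintegral_mono fun z => ?_
      calc ENNReal.ofReal (-c z) ≤ (‖-c z‖₊ : ℝ≥0∞) := Real.ofReal_le_enorm _
        _ = (‖c z‖₊ : ℝ≥0∞) := by rw [nnnorm_neg]
    exact (hle.trans_lt hc_int.2).ne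
  have hcmmeas' : AEMeasurable (fun z => ENNReal.ofReal (-c z)) π :=
    ENNReal.measurable_ofReal.comp_aemeasurable hcmeas.neg.aemeasurable
  -- reduce the iterated lintegrals to product lintegrals
  have hgoalA : (∫⁻ t in Set.Icc (0:ℝ) T, ∫⁻ x, ENNReal.ofReal
          ((∑ i, (fderiv ℝ (fun y => ρ (y, t)) x (Pi.single i 1) / (2 * ρ (x, t))
              + v (x, t) i) ^ 2) * ρ (x, t)) : ℝ≥0∞)
      = ∫⁻ z, ENNReal.ofReal (a z) ∂π :=
    (MeasureTheory.lintegral_prod _ hameas').symm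
  have hgoalB : (∫⁻ t in Set.Icc (0:ℝ) T, ∫⁻ x, ENNReal.ofReal
          ((∑ i, ((fderiv ℝ (fun y => ρ (y, t)) x (Pi.single i 1) / (2 * ρ (x, t))) ^ 2
              + v (x, t) i ^ 2)) * ρ (x, t)) : ℝ≥0∞)
      = ∫⁻ z, ENNReal.ofReal (b z) ∂π :=
    (MeasureTheory.lintegral_prod _ hbmeas').symm
  rw [hgoalA, hgoalB]
  by_cases hBtop : (∫⁻ z, ENNReal.ofReal (b z) ∂π) = ⊤
  · -- both sides infinite
    have hAtop : (∫⁻ z, ENNReal.ofReal (a z) ∂π) = ⊤ := by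
      have hble : (∫⁻ z, ENNReal.ofReal (b z) ∂π)
          ≤ ∫⁻ z, (ENNReal.ofReal (a z) + ENNReal.ofReal (-c z)) ∂π := by
        refine lintegral_mono_ae (haeS' _ fun p hp => ?_)
        have hbac : b p = a p + (-c p) := by rw [habc p hp]; ring
        rw [hbac]
        exact ENNReal.ofReal_add_le
      rw [lintegral_add_left' hameas'] at hble
      have h2 := top_le_iff.mp (hBtop ▸ hble)
      rcases ENNReal.add_eq_top.mp h2 with hca | hca
      · exact hca
      · exact absurd hca hcminus
    rw [hAtop, hBtop, EReal.coe_ennreal_top, EReal.top_add_coe, EReal.top_sub_coe]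
  · -- both sides finite
    have hAne : (∫⁻ z, ENNReal.ofReal (a z) ∂π) ≠ ⊤ := by
      have hale : (∫⁻ z, ENNReal.ofReal (a z) ∂π)
          ≤ ∫⁻ z, (ENNReal.ofReal (b z) + ENNReal.ofReal (c z)) ∂π := by
        refine lintegral_mono_ae (haeS' _ fun p hp => ?_)
        rw [habc p hp]
        exact ENNReal.ofReal_add_le
      rw [lintegral_add_left' hbmeas'] at hale
      exact (hale.trans_lt (ENNReal.add_lt_top.mpr ⟨lt_top_iff_ne_top.mpr hBtop, lt_top_iff_ne_top.mpr hcplus⟩)).ne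
    have hfin : ∀ (F : ℝ × (Fin d → ℝ) → ℝ), AEStronglyMeasurable F π → (∀ p ∈ S', 0 ≤ F p)
        → (∫⁻ z, ENNReal.ofReal (F z) ∂π) ≠ ⊤ → Integrable F π := by
      intro F hFm hFnn hFfin
      refine ⟨hFm, ?_⟩
      rw [MeasureTheory.hasFiniteIntegral_iff_ofReal (haeS' _ hFnn)]
      exact lt_top_iff_ne_top.mpr hFfin
    have ha_int : Integrable a π := hfin a hameas hann hAne
    have hb_int : Integrable b π := hfin b hbmeas hbnn hBtop
    have hXa : (∫⁻ z, ENNReal.ofReal (a z) ∂π) = ENNReal.ofReal (∫ z, a z ∂π) :=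
      (ofReal_integral_eq_lintegral_ofReal ha_int (haeS' _ hann)).symm
    have hXb : (∫⁻ z, ENNReal.ofReal (b z) ∂π) = ENNReal.ofReal (∫ z, b z ∂π) :=
      (ofReal_integral_eq_lintegral_ofReal hb_int (haeS' _ hbnn)).symm
    have hceqint : (∫ z, c z ∂π) = HT - H0 := by
      have h1 : (∫ z, c z ∂π) = ∫ t in Set.Icc (0:ℝ) T,
          ∫ x, ∑ i, fderiv ℝ (fun y => ρ (y, t)) x (Pi.single i 1) * v (x, t) i :=
        integral_prod _ hc_int
      rw [h1, ← part1]
    have hXab : (∫ z, a z ∂π) = (∫ z, b z ∂π) + (HT - H0) := by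
      rw [← hceqint, ← integral_add hb_int hc_int]
      exact integral_congr_ae (haeS' _ habc)
    have hXa0 : 0 ≤ ∫ z, a z ∂π := integral_nonneg_of_ae (haeS' _ hann)
    have hXb0 : 0 ≤ ∫ z, b z ∂π := integral_nonneg_of_ae (haeS' _ hbnn)
    rw [hXa, hXb, EReal.coe_ennreal_ofReal, EReal.coe_ennreal_ofReal,
      sup_eq_left.mpr hXa0, sup_eq_left.mpr hXb0]
    have hfinal : (∫ z, a z ∂π) = (∫ z, b z ∂π) + HT - H0 := by rw [hXab]; ring
    exact_mod_cast hfinal
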